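/- The matrices α*_i A α*_j − α*_j A α*_i (1 ≤ i < j ≤ D) form a basis of the space of antisymmetric A-like matrices for Q_D; in particular this space has dimension binom(D,2). Consequently the space of all A-like matrices for Q_D has dimension 1 + D + binom(D,2). -/

import Mathlib

open Matrix BigOperators Finset

/-- Vertex set of the `D`-dimensional hypercube. -/
abbrev Vx (D : ℕ) := Fin D → Fin 2

/-- Number of coordinates at which `x` and `y` differ (Hamming distance). -/
def hamming {D : ℕ} (x y : Vx D) : ℕ :=
  (Finset.univ.filter (fun i => x i ≠ y i)).card

/-- Adjacency matrix of the hypercube `Q_D`. -/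
noncomputable def adjA (D : ℕ) : Matrix (Vx D) (Vx D) ℝ :=
  fun x y => if hamming x y = 1 then 1 else 0

/-- The `i`-adjacency matrix `α_i`. -/
noncomputable def alpha {D : ℕ} (i : Fin D) : Matrix (Vx D) (Vx D) ℝ :=
  fun x y => if (x i ≠ y i ∧ ∀ j, j ≠ i → x j = y j) then 1 else 0

/-- The diagonal matrix `α*_i` with `(x,x)`-entry `(-1)^(x_i)`. -/
noncomputable def alphaStar {D : ℕ} (i : Fin D) : Matrix (Vx D) (Vx D) ℝ :=
  Matrix.diagonal (fun x => (-1 : ℝ) ^ ((x i : ℕ)))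

namespace HC


variable {D : ℕ}

/-- flip coordinate `k`. -/
def flip (k : Fin D) (x : Vx D) : Vx D := Function.update x k (1 - x k)

lemma fin2_neq (a : Fin 2) : 1 - a ≠ a := by revert a; decide

lemma fin2_eq_of_ne {a b : Fin 2} (h : a ≠ b) : b = 1 - a := by revert a b; decide

@[simp] lemma flip_apply_self (k : Fin D) (x : Vx D) : flip k x k = 1 - x k := by
  simp [flip]

lemma flip_apply_ne (k : Fin D) (x : Vx D) {j : Fin D} (h : j ≠ k) : flip k x j = x j := by
  simp [flip, Function.update_of_ne h]

@[simp] lemma flip_flip (k : Fin D) (x : Vx D) : flip k (flip k x) = x := by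
  funext j
  by_cases h : j = k
  · subst h; simp only [flip_apply_self]; generalize x j = a; revert a; decide
  · rw [flip_apply_ne _ _ h, flip_apply_ne _ _ h]

lemma flip_comm (k l : Fin D) (x : Vx D) : flip k (flip l x) = flip l (flip k x) := by
  by_cases hkl : k = l
  · subst hkl; rfl
  funext j
  by_cases hk : j = k
  · subst hk
    rw [flip_apply_self, flip_apply_ne _ _ hkl, flip_apply_ne l _ hkl, flip_apply_self]
  · by_cases hl : j = l
    · subst hl
      rw [flip_apply_ne k _ (Ne.symm hkl), flip_apply_self, flip_apply_self,
        flip_apply_ne _ _ (Ne.symm hkl)]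
    · rw [flip_apply_ne _ _ hk, flip_apply_ne _ _ hl, flip_apply_ne _ _ hl, flip_apply_ne _ _ hk]

lemma flip_ne (k : Fin D) (x : Vx D) : flip k x ≠ x := by
  intro h
  have := congrFun h k
  rw [flip_apply_self] at this
  exact fin2_neq _ this

lemma flip_inj_idx {k l : Fin D} {x : Vx D} (h : flip k x = flip l x) : k = l := by
  by_contra hkl
  have := congrFun h k
  rw [flip_apply_self, flip_apply_ne _ _ hkl] at this
  exact fin2_neq _ this

/-- Hamming toggle lemma. -/
lemma hamming_flip_right (x y : Vx D) (k : Fin D) :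
    hamming x (flip k y) = if x k = y k then hamming x y + 1 else hamming x y - 1 := by
  unfold hamming
  by_cases h : x k = y k
  · rw [if_pos h]
    have hk : k ∉ Finset.univ.filter (fun i => x i ≠ y i) := by simp [h]
    have : Finset.univ.filter (fun i => x i ≠ flip k y i) =
        insert k (Finset.univ.filter (fun i => x i ≠ y i)) := by
      ext i
      by_cases hik : i = k
      · subst hik
        simp [flip_apply_self, h, fin2_neq]
        intro hc; exact fin2_neq _ hc.symm
      · simp [flip_apply_ne _ _ hik, hik]
    rw [this, Finset.card_insert_of_notMem hk]
  · rw [if_neg h]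
    have hk : k ∈ Finset.univ.filter (fun i => x i ≠ y i) := by simp [h]
    have : Finset.univ.filter (fun i => x i ≠ y i) =
        insert k (Finset.univ.filter (fun i => x i ≠ flip k y i)) := by
      ext i
      by_cases hik : i = k
      · subst hik
        simp [flip_apply_self, h]
      · simp [flip_apply_ne _ _ hik, hik]
    have hk' : k ∉ Finset.univ.filter (fun i => x i ≠ flip k y i) := by
      simp [flip_apply_self]
      exact fin2_eq_of_ne (Ne.symm h)
    rw [this, Finset.card_insert_of_notMem hk']
    simp

@[simp] lemma hamming_self (x : Vx D) : hamming x x = 0 := by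
  simp [hamming]

lemma hamming_comm (x y : Vx D) : hamming x y = hamming y x := by
  unfold hamming
  congr 1
  ext i
  simp [ne_comm]

@[simp] lemma hamming_flip_self (x : Vx D) (k : Fin D) : hamming x (flip k x) = 1 := by
  rw [hamming_flip_right]
  simp

lemma hamming_flip2 (x : Vx D) {k l : Fin D} (h : k ≠ l) :
    hamming x (flip k (flip l x)) = 2 := by
  rw [hamming_flip_right]
  have : x k = flip l x k := (flip_apply_ne l x h).symm
  rw [if_pos this, hamming_flip_self]

lemma hamming_eq_zero_iff {x y : Vx D} : hamming x y = 0 ↔ x = y := by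
  constructor
  · intro h
    funext i
    by_contra hc
    have : i ∈ Finset.univ.filter (fun i => x i ≠ y i) := by simp [hc]
    rw [hamming, Finset.card_eq_zero] at h
    simp [h] at this
  · rintro rfl; simp

lemma hamming_eq_one_iff {x y : Vx D} : hamming x y = 1 ↔ ∃ k, y = flip k x := by
  constructor
  · intro h
    rw [hamming, Finset.card_eq_one] at h
    obtain ⟨k, hk⟩ := h
    refine ⟨k, funext fun j => ?_⟩
    by_cases hjk : j = k
    · subst hjk
      have : j ∈ Finset.univ.filter (fun i => x i ≠ y i) := by rw [hk]; simp
      simp at this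
      rw [flip_apply_self, ← fin2_eq_of_ne this]
    · have : j ∉ Finset.univ.filter (fun i => x i ≠ y i) := by rw [hk]; simp [hjk]
      simp at this
      rw [flip_apply_ne _ _ hjk, this]
  · rintro ⟨k, rfl⟩; simp

lemma hamming_eq_two_iff {x y : Vx D} :
    hamming x y = 2 ↔ ∃ k l, k ≠ l ∧ y = flip k (flip l x) := by
  constructor
  · intro h
    rw [hamming, Finset.card_eq_two] at h
    obtain ⟨k, l, hkl, hs⟩ := h
    refine ⟨k, l, hkl, funext fun j => ?_⟩
    by_cases hjk : j = k
    · subst hjk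
      have : j ∈ Finset.univ.filter (fun i => x i ≠ y i) := by rw [hs]; simp
      simp at this
      rw [flip_apply_self, flip_apply_ne _ _ hkl, ← fin2_eq_of_ne this]
    · by_cases hjl : j = l
      · subst hjl
        have : j ∈ Finset.univ.filter (fun i => x i ≠ y i) := by rw [hs]; simp
        simp at this
        rw [flip_apply_ne _ _ hjk, flip_apply_self, ← fin2_eq_of_ne this]
      · have : j ∉ Finset.univ.filter (fun i => x i ≠ y i) := by rw [hs]; simp [hjk, hjl]
        simp at this
        rw [flip_apply_ne _ _ hjk, flip_apply_ne _ _ hjl, this]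
  · rintro ⟨k, l, hkl, rfl⟩
    exact hamming_flip2 x hkl

/-- the sign `(-1)^(x k)`. -/
noncomputable def sg (k : Fin D) (x : Vx D) : ℝ := (-1 : ℝ) ^ ((x k : ℕ))

lemma sg_flip_self (k : Fin D) (x : Vx D) : sg k (flip k x) = -sg k x := by
  unfold sg
  rw [flip_apply_self]
  generalize x k = a
  revert a; intro a
  fin_cases a <;> norm_num

lemma sg_flip_ne {k l : Fin D} (h : k ≠ l) (x : Vx D) : sg k (flip l x) = sg k x := by
  unfold sg; rw [flip_apply_ne _ _ h]

lemma sg_sq (k : Fin D) (x : Vx D) : sg k x * sg k x = 1 := by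
  unfold sg; rw [← pow_add]; generalize x k = a; fin_cases a <;> norm_num

/-- alternate description of `alpha`. -/
lemma alpha_eq (i : Fin D) (x y : Vx D) :
    alpha i x y = if y = flip i x then 1 else 0 := by
  unfold alpha
  congr 1
  simp only [eq_iff_iff]
  constructor
  · rintro ⟨h1, h2⟩
    funext j
    by_cases hj : j = i
    · subst hj
      rw [flip_apply_self]
      revert h1; generalize x j = a; generalize y j = b; revert a b; decide
    · rw [flip_apply_ne _ _ hj, h2 j hj]
  · rintro rfl
    constructor
    · rw [flip_apply_self]; intro hc; revert hc; generalize x i = a; revert a; decide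
    · intro j hj; exact (flip_apply_ne _ _ hj).symm

lemma adjA_apply (x y : Vx D) : adjA D x y = if hamming x y = 1 then 1 else 0 := rfl

lemma adjA_eq_sum_ite (x y : Vx D) :
    adjA D x y = ∑ k : Fin D, if y = flip k x then (1:ℝ) else 0 := by
  rw [adjA_apply]
  by_cases h : hamming x y = 1
  · obtain ⟨k, rfl⟩ := hamming_eq_one_iff.mp h
    rw [if_pos h, Finset.sum_eq_single k]
    · simp
    · intro l _ hl
      rw [if_neg]
      intro hc
      exact hl (flip_inj_idx hc.symm)
    · intro hc; exact absurd (Finset.mem_univ k) hc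
  · rw [if_neg h, eq_comm, Finset.sum_eq_zero]
    intro k _
    rw [if_neg]
    rintro rfl
    exact h (hamming_flip_self x k)

lemma adjA_symm (x y : Vx D) : adjA D x y = adjA D y x := by
  rw [adjA_apply, adjA_apply, hamming_comm]

lemma mul_adjA_apply (M : Matrix (Vx D) (Vx D) ℝ) (x z : Vx D) :
    (M * adjA D) x z = ∑ k : Fin D, M x (flip k z) := by
  rw [Matrix.mul_apply]
  have : ∀ y, M x y * adjA D y z = ∑ k : Fin D, if y = flip k z then M x y else 0 := by
    intro y
    rw [adjA_symm, adjA_eq_sum_ite, Finset.mul_sum]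
    congr 1; funext k
    split <;> simp
  simp_rw [this]
  rw [Finset.sum_comm]
  congr 1; funext k
  rw [Finset.sum_ite_eq' Finset.univ (flip k z) (fun y => M x y)]
  simp

lemma adjA_mul_apply (M : Matrix (Vx D) (Vx D) ℝ) (x z : Vx D) :
    (adjA D * M) x z = ∑ k : Fin D, M (flip k x) z := by
  rw [Matrix.mul_apply]
  have : ∀ y, adjA D x y * M y z = ∑ k : Fin D, if y = flip k x then M y z else 0 := by
    intro y
    rw [adjA_eq_sum_ite, Finset.sum_mul]
    congr 1; funext k
    split <;> simp
  simp_rw [this]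
  rw [Finset.sum_comm]
  congr 1; funext k
  rw [Finset.sum_ite_eq' Finset.univ (flip k x) (fun y => M y z)]
  simp

/-- the matrix `α*_i A α*_j - α*_j A α*_i`. -/
noncomputable def Bm (i j : Fin D) : Matrix (Vx D) (Vx D) ℝ :=
  alphaStar i * adjA D * alphaStar j - alphaStar j * adjA D * alphaStar i

lemma Bm_apply (i j : Fin D) (x y : Vx D) :
    Bm i j x y = adjA D x y * (sg i x * sg j y - sg j x * sg i y) := by
  unfold Bm alphaStar
  rw [Matrix.sub_apply, Matrix.mul_diagonal, Matrix.mul_diagonal,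
    Matrix.diagonal_mul, Matrix.diagonal_mul]
  unfold sg
  ring

lemma Bm_apply_diag (i j : Fin D) (x : Vx D) : Bm i j x x = 0 := by
  rw [Bm_apply, adjA_apply, hamming_self]
  norm_num

lemma Bm_apply_far (i j : Fin D) {x y : Vx D} (h : 2 ≤ hamming x y) : Bm i j x y = 0 := by
  rw [Bm_apply, adjA_apply, if_neg (by omega)]
  ring

lemma Bm_apply_flip {i j : Fin D} (hij : i ≠ j) (k : Fin D) (x : Vx D) :
    Bm i j x (flip k x) =
      (if k = i then 2 * (sg i x * sg j x) else if k = j then -(2 * (sg i x * sg j x)) else 0) := by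
  rw [Bm_apply, adjA_apply, hamming_flip_self, if_pos rfl, one_mul]
  by_cases hi : k = i
  · subst hi
    rw [if_pos rfl, sg_flip_self]
    rw [sg_flip_ne (Ne.symm hij)]
    ring
  · rw [if_neg hi]
    by_cases hj : k = j
    · subst hj
      rw [if_pos rfl, sg_flip_self, sg_flip_ne (Ne.symm hi)]
      ring
    · rw [if_neg hj, sg_flip_ne (Ne.symm hi), sg_flip_ne (Ne.symm hj)]
      ring

/-- support condition: nonzero entries only at Hamming distance ≤ 1. -/
def Supp (B : Matrix (Vx D) (Vx D) ℝ) : Prop :=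
  ∀ x y : Vx D, 2 ≤ hamming x y → B x y = 0

lemma sum_single {f : Fin D → ℝ} {m : Fin D} (h0 : ∀ k, k ≠ m → f k = 0) :
    ∑ k : Fin D, f k = f m := by
  rw [Finset.sum_eq_single m (fun k _ hk => h0 k hk)
    (fun hm => absurd (Finset.mem_univ m) hm)]

lemma sum_two {f : Fin D → ℝ} {m n : Fin D} (h : m ≠ n)
    (h0 : ∀ k, k ≠ m → k ≠ n → f k = 0) : ∑ k : Fin D, f k = f m + f n := by
  rw [← Finset.sum_subset (Finset.subset_univ {m, n})
    (fun k _ hk => h0 k (fun h1 => hk (by simp [h1])) (fun h2 => hk (by simp [h2])))]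
  exact Finset.sum_pair h

lemma hamming_flip_mid2 {x : Vx D} {k m : Fin D} (h : k ≠ m) :
    hamming x (flip k (flip m x)) = 2 := hamming_flip2 x h

lemma hamming_flip_left2 {x : Vx D} {k m : Fin D} (h : k ≠ m) :
    hamming (flip k x) (flip m x) = 2 := by
  rw [hamming_comm]
  have : flip k x = flip k (flip m (flip m x)) := by rw [flip_flip]
  rw [this]
  exact hamming_flip2 (flip m x) h

lemma hamming_flip3 {x z : Vx D} {k : Fin D} (h2 : hamming x z = 2) (hk : x k = z k) :
    hamming x (flip k z) = 3 := by
  rw [hamming_flip_right, if_pos hk, h2]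

lemma hamming_flip3' {x z : Vx D} {k : Fin D} (h2 : hamming x z = 2) (hk : x k = z k) :
    hamming (flip k x) z = 3 := by
  rw [hamming_comm, hamming_flip_right, if_pos hk.symm, hamming_comm, h2]

section sums
variable {B : Matrix (Vx D) (Vx D) ℝ}

lemma sumR1 (hs : Supp B) (x : Vx D) (m : Fin D) :
    ∑ k : Fin D, B x (flip k (flip m x)) = B x x := by
  have := sum_single (f := fun k => B x (flip k (flip m x))) (m := m)
    (fun k hk => hs _ _ (le_of_eq (hamming_flip_mid2 hk).symm))
  rw [this]
  show B x (flip m (flip m x)) = B x x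
  rw [flip_flip]

lemma sumL1 (hs : Supp B) (x : Vx D) (m : Fin D) :
    ∑ k : Fin D, B (flip k x) (flip m x) = B (flip m x) (flip m x) := by
  exact sum_single (fun k hk => hs _ _ (le_of_eq (hamming_flip_left2 hk).symm))

lemma sumR2 (hs : Supp B) {x : Vx D} {m n : Fin D} (hmn : m ≠ n) :
    ∑ k : Fin D, B x (flip k (flip m (flip n x))) = B x (flip n x) + B x (flip m x) := by
  have h2 : hamming x (flip m (flip n x)) = 2 := hamming_flip2 x hmn
  have := sum_two (f := fun k => B x (flip k (flip m (flip n x)))) hmn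
    (fun k hkm hkn => by
      refine hs _ _ ?_
      have hk : x k = flip m (flip n x) k := by
        rw [flip_apply_ne _ _ hkm, flip_apply_ne _ _ hkn]
      rw [hamming_flip3 h2 hk]
      omega)
  rw [this]
  show B x (flip m (flip m (flip n x))) + B x (flip n (flip m (flip n x))) = _
  rw [flip_flip, flip_comm n m, flip_flip]

lemma sumL2 (hs : Supp B) {x : Vx D} {m n : Fin D} (hmn : m ≠ n) :
    ∑ k : Fin D, B (flip k x) (flip m (flip n x)) =
      B (flip m x) (flip n (flip m x)) + B (flip n x) (flip m (flip n x)) := by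
  have h2 : hamming x (flip m (flip n x)) = 2 := hamming_flip2 x hmn
  have := sum_two (f := fun k => B (flip k x) (flip m (flip n x))) hmn
    (fun k hkm hkn => by
      refine hs _ _ ?_
      have hk : x k = flip m (flip n x) k := by
        rw [flip_apply_ne _ _ hkm, flip_apply_ne _ _ hkn]
      rw [hamming_flip3' h2 hk]
      omega)
  rw [this]
  show B (flip m x) (flip m (flip n x)) + B (flip n x) (flip m (flip n x)) = _
  rw [flip_comm m n]

lemma sumR3 (hs : Supp B) {x z : Vx D} (h3 : 3 ≤ hamming x z) :
    ∑ k : Fin D, B x (flip k z) = 0 := by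
  refine Finset.sum_eq_zero fun k _ => hs _ _ ?_
  rw [hamming_flip_right]
  split <;> omega

lemma sumL3 (hs : Supp B) {x z : Vx D} (h3 : 3 ≤ hamming x z) :
    ∑ k : Fin D, B (flip k x) z = 0 := by
  refine Finset.sum_eq_zero fun k _ => hs _ _ ?_
  rw [hamming_comm, hamming_flip_right]
  rw [hamming_comm x z] at h3
  split <;> omega

/-- commutation is equivalent to the three local conditions. -/
lemma comm_iff (hs : Supp B) :
    B * adjA D = adjA D * B ↔
      ((∀ x : Vx D, ∑ k : Fin D, B x (flip k x) = ∑ k : Fin D, B (flip k x) x) ∧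
       (∀ (x : Vx D) (m : Fin D), B x x = B (flip m x) (flip m x)) ∧
       (∀ (x : Vx D) (m n : Fin D), m ≠ n →
          B x (flip n x) + B x (flip m x) =
            B (flip m x) (flip n (flip m x)) + B (flip n x) (flip m (flip n x)))) := by
  constructor
  · intro h
    have he : ∀ x z, ∑ k : Fin D, B x (flip k z) = ∑ k : Fin D, B (flip k x) z := by
      intro x z
      rw [← mul_adjA_apply, ← adjA_mul_apply, h]
    refine ⟨fun x => he x x, fun x m => ?_, fun x m n hmn => ?_⟩
    · have := he x (flip m x)
      rwa [sumR1 hs, sumL1 hs] at this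
    · have := he x (flip m (flip n x))
      rwa [sumR2 hs hmn, sumL2 hs hmn] at this
  · rintro ⟨c0, cd, c2⟩
    ext x z
    rw [mul_adjA_apply, adjA_mul_apply]
    rcases lt_or_ge (hamming x z) 3 with hlt | hge
    · interval_cases h : hamming x z
      · obtain rfl := hamming_eq_zero_iff.mp h
        exact c0 x
      · obtain ⟨m, rfl⟩ := hamming_eq_one_iff.mp h
        rw [sumR1 hs, sumL1 hs]
        exact cd x m
      · obtain ⟨m, n, hmn, rfl⟩ := hamming_eq_two_iff.mp h
        rw [sumR2 hs hmn, sumL2 hs hmn]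
        exact c2 x m n hmn
    · rw [sumR3 hs hge, sumL3 hs hge]

end sums
/-- the all-zeros vertex. -/
def x0 (D : ℕ) : Vx D := fun _ => 0

section key
variable (f : Fin D → Vx D → ℝ)

def C2 : Prop := ∀ (x : Vx D) (m n : Fin D), m ≠ n →
  f n x + f m x = f n (flip m x) + f m (flip n x)

def C0 : Prop := ∀ x : Vx D, ∑ k : Fin D, f k x = ∑ k : Fin D, f k (flip k x)

variable {f}

lemma hA (c2 : C2 f) {k l : Fin D} (hkl : k ≠ l) (x : Vx D) :
    f k x - f k (flip l x) = -(f l x - f l (flip k x)) := by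
  have := c2 x l k hkl.symm
  linarith

lemma vA (c2 : C2 f) {k l : Fin D} (hlk : l ≠ k) (x : Vx D) :
    f k (flip l x) + f k (flip k (flip l x)) = f k x + f k (flip k x) := by
  have e1 := c2 x l k hlk
  have e2 := c2 (flip k x) l k hlk
  rw [flip_flip] at e2
  rw [flip_comm k l]
  linarith

lemma hkA (c2 : C2 f) {k l : Fin D} (hkl : k ≠ l) (x : Vx D) :
    f k (flip k x) - f k (flip l (flip k x)) = -(f k x - f k (flip l x)) := by
  have e1 := vA c2 (Ne.symm hkl) x
  rw [flip_comm k l] at e1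
  have e2 := vA c2 (Ne.symm hkl) (x0 D)
  -- use e1 directly:
  linarith [vA c2 (Ne.symm hkl) x]

lemma Tid (f : Fin D → Vx D → ℝ) (k l m : Fin D) (x : Vx D) :
    (f k (flip m x) - f k (flip l (flip m x))) - (f k x - f k (flip l x)) =
      (f k (flip l x) - f k (flip m (flip l x))) - (f k x - f k (flip m x)) := by
  rw [flip_comm l m]
  ring

lemma T0 (c2 : C2 f) {k l m : Fin D} (hkl : k ≠ l) (hkm : k ≠ m) (hlm : l ≠ m) (x : Vx D) :
    f k (flip m x) - f k (flip l (flip m x)) = f k x - f k (flip l x) := by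
  -- T a b c x := h a b (flip c x) - h a b x  where h a b y = f a y - f a (flip b y)
  have Tid' : ∀ (a b c : Fin D) (y : Vx D),
      (f a (flip c y) - f a (flip b (flip c y))) - (f a y - f a (flip b y)) =
      (f a (flip b y) - f a (flip c (flip b y))) - (f a y - f a (flip c y)) := Tid f
  have neg : ∀ (a b : Fin D), a ≠ b → ∀ y : Vx D,
      f a y - f a (flip b y) = -(f b y - f b (flip a y)) := fun a b h y => hA c2 h y
  -- T k l m = T k m l  (Tid)
  -- T a b c = -T b a c  (neg at both points)
  have key : (f k (flip m x) - f k (flip l (flip m x))) - (f k x - f k (flip l x)) = 0 := by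
    have e1 := Tid' k l m x
    have e2 := Tid' l k m x
    have e3 := Tid' m l k x
    have e4 := Tid' k m l x
    have n1 := neg k l hkl (flip m x)
    have n2 := neg k l hkl x
    have n3 := neg l m hlm (flip k x)
    have n4 := neg l m hlm x
    have n5 := neg m k hkm.symm (flip l x)
    have n6 := neg m k hkm.symm x
    have n7 := neg k m hkm (flip l x)
    have n8 := neg k m hkm x
    have n9 := neg l k hkl.symm (flip m x)
    have n10 := neg l k hkl.symm x
    have n11 := neg m l hlm.symm (flip k x)
    have n12 := neg m l hlm.symm x
    linarith
  linarith

lemma conn (g : Vx D → ℝ) (h0 : g (x0 D) = 0)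
    (step : ∀ (m : Fin D) (x : Vx D), g x = 0 → g (flip m x) = 0) : ∀ x, g x = 0 := by
  suffices H : ∀ (n : ℕ) (x : Vx D), hamming (x0 D) x = n → g x = 0 by
    intro x; exact H _ x rfl
  intro n
  induction n with
  | zero =>
    intro x hx
    obtain rfl := hamming_eq_zero_iff.mp hx
    exact h0
  | succ n ih =>
    intro x hx
    have hpos : 0 < (Finset.univ.filter (fun i => x0 D i ≠ x i)).card := by
      have : hamming (x0 D) x = n + 1 := hx
      rw [hamming] at this
      omega
    obtain ⟨m, hm⟩ := Finset.card_pos.mp hpos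
    rw [Finset.mem_filter] at hm
    have hm' : x0 D m ≠ x m := hm.2
    have hflip : hamming (x0 D) (flip m x) = n := by
      rw [hamming_flip_right, if_neg hm', hx]
      omega
    have h1 := step m (flip m x) (ih (flip m x) hflip)
    rwa [flip_flip] at h1
end key

lemma fin2_one_sub_zero : (1 - 0 : Fin 2) = 1 := by decide
lemma fin2_one_sub_ne_zero {a : Fin 2} (h : a ≠ 0) : 1 - a = 0 := by revert a; decide

lemma x0_apply (k : Fin D) : x0 D k = 0 := rfl

lemma flip_x0_apply (t k : Fin D) : flip t (x0 D) k = if k = t then 1 else 0 := by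
  by_cases h : k = t
  · subst h; rw [flip_apply_self, if_pos rfl]; exact fin2_one_sub_zero
  · rw [flip_apply_ne _ _ h, if_neg h]; rfl

/-- The key rigidity lemma: under the commutation conditions and vanishing of the
`h`-data at the base point, each `f k` is constant. -/
lemma key {f : Fin D → Vx D → ℝ} (c2 : C2 f) (c0 : C0 f)
    (h0 : ∀ k l : Fin D, k < l → f k (x0 D) = f k (flip l (x0 D))) :
    ∀ (k : Fin D) (x : Vx D), f k x = f k (x0 D) := by
  classical
  -- all h vanish at base point
  have h0' : ∀ k l : Fin D, k ≠ l → f k (x0 D) - f k (flip l (x0 D)) = 0 := by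
    intro k l hkl
    rcases lt_or_gt_of_ne hkl with h | h
    · rw [h0 k l h]; ring
    · have := hA c2 hkl (x0 D)
      rw [h0 l k h] at this
      linarith
  -- h vanish everywhere
  have hAll : ∀ (k l : Fin D), k ≠ l → ∀ x, f k x - f k (flip l x) = 0 := by
    intro k l hkl
    refine conn _ (h0' k l hkl) ?_
    intro m x hx
    by_cases hmk : m = k
    · subst hmk
      have := hkA c2 hkl x
      linarith
    · by_cases hml : m = l
      · subst hml
        rw [flip_flip]
        linarith
      · have := T0 c2 hkl (fun h => hmk h.symm) (fun h => hml h.symm) x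
        linarith
  -- v is constant
  have vconst : ∀ (k : Fin D) (x : Vx D),
      f k x + f k (flip k x) = f k (x0 D) + f k (flip k (x0 D)) := by
    intro k
    have hg := conn (fun x => (f k x + f k (flip k x)) - (f k (x0 D) + f k (flip k (x0 D))))
      (by ring) (fun m x hx => ?_)
    · intro x
      have h2 : (f k x + f k (flip k x)) - (f k (x0 D) + f k (flip k (x0 D))) = 0 := hg x
      linarith
    · have hx' : (f k x + f k (flip k x)) - (f k (x0 D) + f k (flip k (x0 D))) = 0 := hx
      show (f k (flip m x) + f k (flip k (flip m x))) - (f k (x0 D) + f k (flip k (x0 D))) = 0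
      by_cases hmk : m = k
      · subst hmk
        rw [flip_flip]
        linarith
      · have hv := vA c2 hmk x
        linarith
  -- the two-value form
  set P : Fin D → ℝ := fun k => f k (x0 D) with hP
  set Q : Fin D → ℝ := fun k => f k (flip k (x0 D)) with hQ
  have Fform : ∀ (k : Fin D) (x : Vx D), f k x = if x k = 0 then P k else Q k := by
    intro k
    have hg := conn (fun x => f k x - (if x k = 0 then P k else Q k))
      (by simp [x0_apply, hP]) (fun m x hx => ?_)
    · intro x
      have h2 : f k x - (if x k = 0 then P k else Q k) = 0 := hg x
      rcases eq_or_ne (x k) 0 with h | h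
      · rw [if_pos h] at h2 ⊢; linarith
      · rw [if_neg h] at h2 ⊢; linarith
    · have hx' : f k x - (if x k = 0 then P k else Q k) = 0 := hx
      show f k (flip m x) - (if flip m x k = 0 then P k else Q k) = 0
      by_cases hmk : m = k
      · subst hmk
        have hv := vconst m x
        rw [flip_apply_self]
        rcases eq_or_ne (x m) 0 with h | h
        · rw [if_pos h] at hx'
          rw [h, fin2_one_sub_zero, if_neg (by decide)]
          have : Q m = f m (x0 D) + f m (flip m (x0 D)) - P m := by rw [hP, hQ]; ring
          linarith
        · rw [if_neg h] at hx'
          rw [fin2_one_sub_ne_zero h, if_pos rfl]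
          have : Q m = f m (x0 D) + f m (flip m (x0 D)) - P m := by rw [hP, hQ]; ring
          linarith
      · have h1 : f k x - f k (flip m x) = 0 := hAll k m (fun h => hmk h.symm) x
        rw [flip_apply_ne _ _ (fun h => hmk h.symm)]
        linarith
  -- Q = P from the c0 condition
  have split : ∀ (a b : Fin D → ℝ) (t : Fin D),
      ∑ k : Fin D, (if k = t then a k else b k) = a t + ∑ k ∈ Finset.univ.erase t, b k := by
    intro a b t
    rw [← Finset.add_sum_erase _ _ (Finset.mem_univ t), if_pos rfl]
    congr 1
    refine Finset.sum_congr rfl fun k hk => ?_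
    rw [if_neg (Finset.ne_of_mem_erase hk)]
  have sumsplit : ∀ (b : Fin D → ℝ) (t : Fin D),
      ∑ k : Fin D, b k = b t + ∑ k ∈ Finset.univ.erase t, b k :=
    fun b t => (Finset.add_sum_erase _ _ (Finset.mem_univ t)).symm
  have QP : ∀ t : Fin D, Q t = P t := by
    intro t
    have eq1 : ∑ k : Fin D, P k = ∑ k : Fin D, Q k := by
      have := c0 (x0 D)
      simpa [hP, hQ] using this
    have eq2 : ∑ k : Fin D, (if k = t then Q k else P k)
        = ∑ k : Fin D, (if k = t then P k else Q k) := by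
      have hc := c0 (flip t (x0 D))
      have lhs : ∀ k : Fin D, f k (flip t (x0 D)) = (if k = t then Q k else P k) := by
        intro k
        rw [Fform k, flip_x0_apply]
        rcases eq_or_ne k t with h | h
        · rw [if_pos h, if_neg (by decide), if_pos h, h]
        · rw [if_neg h, if_pos rfl, if_neg h]
      have rhs : ∀ k : Fin D, f k (flip k (flip t (x0 D))) = (if k = t then P k else Q k) := by
        intro k
        rw [Fform k, flip_apply_self, flip_x0_apply]
        rcases eq_or_ne k t with h | h
        · rw [if_pos h, if_pos (by decide), if_pos h]
        · rw [if_neg h, if_neg (by decide), if_neg h]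
      calc ∑ k : Fin D, (if k = t then Q k else P k)
          = ∑ k : Fin D, f k (flip t (x0 D)) := by
            exact Finset.sum_congr rfl fun k _ => (lhs k).symm
        _ = ∑ k : Fin D, f k (flip k (flip t (x0 D))) := hc
        _ = ∑ k : Fin D, (if k = t then P k else Q k) :=
            Finset.sum_congr rfl fun k _ => rhs k
    rw [split Q P t, split P Q t] at eq2
    rw [sumsplit P t, sumsplit Q t] at eq1
    linarith
  intro k x
  rw [Fform k x]
  rcases eq_or_ne (x k) 0 with h | h
  · rw [if_pos h]
  · rw [if_neg h, QP k]

lemma sg_x0 (k : Fin D) : sg k (x0 D) = 1 := by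
  unfold sg x0
  norm_num

lemma Bm_flip_val {i j : Fin D} (hij : i ≠ j) (k : Fin D) (x : Vx D) :
    Bm i j x (flip k x) =
      (if k = i then 2 else if k = j then -2 else 0) * (sg i x * sg j x) := by
  rw [Bm_apply_flip hij]
  by_cases h1 : k = i
  · rw [if_pos h1, if_pos h1]
  · rw [if_neg h1, if_neg h1]
    by_cases h2 : k = j
    · rw [if_pos h2, if_pos h2]; ring
    · rw [if_neg h2, if_neg h2]; ring

lemma sprod_flip {i j : Fin D} (hij : i ≠ j) (m : Fin D) (x : Vx D) :
    sg i (flip m x) * sg j (flip m x) =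
      (if m = i ∨ m = j then -1 else 1) * (sg i x * sg j x) := by
  by_cases h1 : m = i
  · subst h1
    rw [if_pos (Or.inl rfl), sg_flip_self, sg_flip_ne (Ne.symm hij)]
    ring
  · by_cases h2 : m = j
    · subst h2
      rw [if_pos (Or.inr rfl), sg_flip_self, sg_flip_ne hij]
      ring
    · rw [if_neg (by tauto), sg_flip_ne (fun h => h1 h.symm), sg_flip_ne (fun h => h2 h.symm)]
      ring

lemma Bm_supp (i j : Fin D) : Supp (Bm i j) := fun _ _ h => Bm_apply_far i j h

lemma Bm_comm {i j : Fin D} (hij : i ≠ j) : Bm i j * adjA D = adjA D * Bm i j := by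
  refine (comm_iff (Bm_supp i j)).mpr ⟨?_, ?_, ?_⟩
  · intro x
    have hl : ∀ k, Bm i j x (flip k x) =
        (if k = i then 2 else if k = j then -2 else 0) * (sg i x * sg j x) :=
      fun k => Bm_flip_val hij k x
    have hr : ∀ k, Bm i j (flip k x) x =
        (if k = i then 2 else if k = j then -2 else 0) *
          ((if k = i ∨ k = j then -1 else 1) * (sg i x * sg j x)) := by
      intro k
      have h1 : Bm i j (flip k x) x = Bm i j (flip k x) (flip k (flip k x)) := by
        rw [flip_flip]
      rw [h1, Bm_flip_val hij, sprod_flip hij]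
    rw [Finset.sum_congr rfl (fun k _ => hl k), Finset.sum_congr rfl (fun k _ => hr k)]
    rw [sum_two hij (fun k h1 h2 => by rw [if_neg h1, if_neg h2]; ring),
      sum_two hij (fun k h1 h2 => by rw [if_neg h1, if_neg h2]; ring)]
    simp [hij, Ne.symm hij]
  · intro x m
    rw [Bm_apply_diag, Bm_apply_diag]
  · intro x m n hmn
    rw [Bm_flip_val hij n x, Bm_flip_val hij m x, Bm_flip_val hij n (flip m x),
      Bm_flip_val hij m (flip n x), sprod_flip hij m x, sprod_flip hij n x]
    by_cases hmi : m = i <;> by_cases hmj : m = j <;> by_cases hni : n = i <;>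
      by_cases hnj : n = j <;> simp_all <;> ring

lemma Bm_antisym {i j : Fin D} (hij : i ≠ j) : (Bm i j)ᵀ = -(Bm i j) := by
  ext x y
  rw [Matrix.transpose_apply, Matrix.neg_apply]
  rcases lt_or_ge (hamming x y) 2 with hlt | hge
  · interval_cases h : hamming x y
    · obtain rfl := hamming_eq_zero_iff.mp h
      simp [Bm_apply_diag]
    · obtain ⟨k, rfl⟩ := hamming_eq_one_iff.mp h
      have h1 : Bm i j (flip k x) x = Bm i j (flip k x) (flip k (flip k x)) := by
        rw [flip_flip]
      rw [h1, Bm_flip_val hij, Bm_flip_val hij, sprod_flip hij]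
      by_cases hki : k = i
      · rw [if_pos hki, if_pos (Or.inl hki)]; ring
      · rw [if_neg hki]
        by_cases hkj : k = j
        · rw [if_pos hkj, if_pos (Or.inr hkj)]; ring
        · rw [if_neg hkj]; ring
  · rw [Bm_apply_far i j hge, Bm_apply_far i j (le_of_le_of_eq hge (hamming_comm x y))]
    ring

section rigid
variable {B : Matrix (Vx D) (Vx D) ℝ}

lemma c2_of_comm (hs : Supp B) (hc : B * adjA D = adjA D * B) :
    C2 (fun k x => B x (flip k x)) := by
  intro x m n hmn
  exact ((comm_iff hs).mp hc).2.2 x m n hmn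

lemma c0_of_comm (hs : Supp B) (hc : B * adjA D = adjA D * B) :
    C0 (fun k x => B x (flip k x)) := by
  intro x
  have h := ((comm_iff hs).mp hc).1 x
  rw [h]
  refine Finset.sum_congr rfl fun k _ => ?_
  show B (flip k x) x = B (flip k x) (flip k (flip k x))
  rw [flip_flip]

lemma diag_const (hs : Supp B) (hc : B * adjA D = adjA D * B) (x : Vx D) :
    B x x = B (x0 D) (x0 D) := by
  have cd := ((comm_iff hs).mp hc).2.1
  have hg := conn (fun x => B x x - B (x0 D) (x0 D)) (by ring) (fun m x hx => ?_)
  · have h2 : B x x - B (x0 D) (x0 D) = 0 := hg x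
    linarith
  · have hx' : B x x - B (x0 D) (x0 D) = 0 := hx
    show B (flip m x) (flip m x) - B (x0 D) (x0 D) = 0
    have := cd x m
    linarith

lemma eq_zero_of_Alike (hs : Supp B) (hc : B * adjA D = adjA D * B)
    (h00 : B (x0 D) (x0 D) = 0)
    (hf0 : ∀ k : Fin D, B (x0 D) (flip k (x0 D)) = 0)
    (hh0 : ∀ k l : Fin D, k < l →
      B (x0 D) (flip k (x0 D)) = B (flip l (x0 D)) (flip k (flip l (x0 D)))) :
    B = 0 := by
  have hkey := key (c2_of_comm hs hc) (c0_of_comm hs hc) hh0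
  ext x y
  rw [Matrix.zero_apply]
  rcases lt_or_ge (hamming x y) 2 with hlt | hge
  · interval_cases h : hamming x y
    · obtain rfl := hamming_eq_zero_iff.mp h
      rw [diag_const hs hc, h00]
    · obtain ⟨k, rfl⟩ := hamming_eq_one_iff.mp h
      have := hkey k x
      rw [this, hf0 k]
  · exact hs x y hge

lemma eq_zero_of_antisym (hs : Supp B) (hc : B * adjA D = adjA D * B)
    (ha : Bᵀ = -B)
    (hh0 : ∀ k l : Fin D, k < l →
      B (x0 D) (flip k (x0 D)) = B (flip l (x0 D)) (flip k (flip l (x0 D)))) :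
    B = 0 := by
  have haent : ∀ x y : Vx D, B y x = -B x y := by
    intro x y
    have := congrFun (congrFun ha x) y
    rwa [Matrix.transpose_apply, Matrix.neg_apply] at this
  have hkey := key (c2_of_comm hs hc) (c0_of_comm hs hc) hh0
  have hf0 : ∀ k : Fin D, B (x0 D) (flip k (x0 D)) = 0 := by
    intro k
    have h1 : B (flip k (x0 D)) (flip k (flip k (x0 D))) = B (x0 D) (flip k (x0 D)) := by
      have := hkey k (flip k (x0 D))
      simpa using this
    rw [flip_flip] at h1
    have h2 := haent (x0 D) (flip k (x0 D))
    linarith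
  have h00 : B (x0 D) (x0 D) = 0 := by
    have := haent (x0 D) (x0 D)
    linarith
  exact eq_zero_of_Alike hs hc h00 hf0 hh0

end rigid

/-- index type for strictly increasing pairs. -/
abbrev Pairs (D : ℕ) := {p : Fin D × Fin D // p.1 < p.2}

lemma core_sum (t : Pairs D → ℝ) {k l : Fin D} (hkl : k < l) :
    ∑ p : Pairs D, t p *
        (Bm p.1.1 p.1.2 (x0 D) (flip k (x0 D)) -
          Bm p.1.1 p.1.2 (flip l (x0 D)) (flip k (flip l (x0 D)))) =
      4 * t ⟨(k, l), hkl⟩ := by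
  have hval : ∀ (a b : Fin D), a ≠ b → ∀ (m : Fin D) (y : Vx D),
      Bm a b y (flip m y) = (if m = a then 2 else if m = b then -2 else 0) *
        (sg a y * sg b y) := fun a b hab m y => Bm_flip_val hab m y
  rw [Finset.sum_eq_single (⟨(k, l), hkl⟩ : Pairs D)]
  · rw [hval k l (ne_of_lt hkl) k, hval k l (ne_of_lt hkl) k]
    rw [sg_x0, sg_x0, sprod_flip (ne_of_lt hkl), sg_x0, sg_x0]
    rw [if_pos rfl, if_pos (Or.inr rfl)]
    ring
  · rintro ⟨⟨a, b⟩, hab⟩ _ hne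
    have hab' : a ≠ b := ne_of_lt hab
    rw [hval a b hab' k, hval a b hab' k, sg_x0, sg_x0, sprod_flip hab', sg_x0, sg_x0]
    have hne' : ¬(a = k ∧ b = l) := by
      rintro ⟨rfl, rfl⟩
      exact hne rfl
    by_cases hka : k = a
    · rw [if_pos hka]
      have hbl : b ≠ l := fun h => hne' ⟨hka.symm, h⟩
      have hla : l ≠ a := fun h => absurd (h ▸ hkl) (by rw [hka]; exact lt_irrefl a)
      rw [if_neg (by tauto)]
      ring
    · rw [if_neg hka]
      by_cases hkb : k = b
      · rw [if_pos hkb]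
        have hla : l ≠ a := by
          intro h
          subst h
          subst hkb
          exact absurd (lt_trans hab hkl) (lt_irrefl _)
        have hlb : l ≠ b := by
          intro h
          subst h
          subst hkb
          exact lt_irrefl _ hkl
        rw [if_neg (by tauto)]
        ring
      · rw [if_neg hkb]
        ring
  · intro h
    exact absurd (Finset.mem_univ _) h

/-- submodule of A-like matrices. -/
noncomputable def AlikeSub (D : ℕ) : Submodule ℝ (Matrix (Vx D) (Vx D) ℝ) where
  carrier := {B : Matrix (Vx D) (Vx D) ℝ |
    B * adjA D = adjA D * B ∧ ∀ x y : Vx D, 2 ≤ hamming x y → B x y = 0}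
  add_mem' := by
    rintro a b ⟨ha1, ha2⟩ ⟨hb1, hb2⟩
    refine ⟨by rw [add_mul, mul_add, ha1, hb1], fun x y h => ?_⟩
    rw [Matrix.add_apply, ha2 x y h, hb2 x y h, add_zero]
  zero_mem' := by
    refine ⟨by rw [zero_mul, mul_zero], fun x y h => ?_⟩
    rw [Matrix.zero_apply]
  smul_mem' := by
    rintro c B ⟨h1, h2⟩
    refine ⟨by rw [Matrix.smul_mul, Matrix.mul_smul, h1], fun x y h => ?_⟩
    rw [Matrix.smul_apply, h2 x y h, smul_zero]

/-- submodule of antisymmetric A-like matrices. -/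
noncomputable def AntiSub (D : ℕ) : Submodule ℝ (Matrix (Vx D) (Vx D) ℝ) where
  carrier := {B : Matrix (Vx D) (Vx D) ℝ |
    (B * adjA D = adjA D * B ∧ ∀ x y : Vx D, 2 ≤ hamming x y → B x y = 0) ∧ Bᵀ = -B}
  add_mem' := by
    rintro a b ⟨⟨ha1, ha2⟩, ha3⟩ ⟨⟨hb1, hb2⟩, hb3⟩
    refine ⟨⟨by rw [add_mul, mul_add, ha1, hb1], fun x y h => ?_⟩, ?_⟩
    · rw [Matrix.add_apply, ha2 x y h, hb2 x y h, add_zero]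
    · rw [Matrix.transpose_add, ha3, hb3, neg_add]
  zero_mem' := by
    refine ⟨⟨by rw [zero_mul, mul_zero], fun x y h => ?_⟩, ?_⟩
    · rw [Matrix.zero_apply]
    · rw [Matrix.transpose_zero, neg_zero]
  smul_mem' := by
    rintro c B ⟨⟨h1, h2⟩, h3⟩
    refine ⟨⟨by rw [Matrix.smul_mul, Matrix.mul_smul, h1], fun x y h => ?_⟩, ?_⟩
    · rw [Matrix.smul_apply, h2 x y h, smul_zero]
    · rw [Matrix.transpose_smul, h3, smul_neg]

lemma Bm_mem_AntiSub {i j : Fin D} (hij : i ≠ j) : Bm i j ∈ AntiSub D :=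
  ⟨⟨Bm_comm hij, fun x y h => Bm_apply_far i j h⟩, Bm_antisym hij⟩

lemma alpha_supp (k : Fin D) : Supp (alpha k) := by
  intro x y h
  rw [alpha_eq]
  split
  · next heq =>
    subst heq
    rw [hamming_flip_self] at h
    omega
  · rfl

lemma alpha_comm_adjA (k : Fin D) : alpha k * adjA D = adjA D * alpha k := by
  ext x z
  rw [mul_adjA_apply, adjA_mul_apply]
  refine Finset.sum_congr rfl fun m _ => ?_
  rw [alpha_eq, alpha_eq]
  refine if_congr ⟨fun h => ?_, fun h => ?_⟩ rfl rfl
  · rw [← flip_flip m z, h, flip_comm]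
  · rw [h, flip_comm, flip_flip]

lemma alpha_mem_AlikeSub (k : Fin D) : alpha k ∈ AlikeSub D :=
  ⟨alpha_comm_adjA k, fun x y h => alpha_supp k x y h⟩

lemma one_mem_AlikeSub : (1 : Matrix (Vx D) (Vx D) ℝ) ∈ AlikeSub D := by
  refine ⟨by rw [one_mul, mul_one], fun x y h => ?_⟩
  refine Matrix.one_apply_ne fun hxy => ?_
  subst hxy
  rw [hamming_self] at h
  omega

lemma Bm_mem_AlikeSub {i j : Fin D} (hij : i ≠ j) : Bm i j ∈ AlikeSub D :=
  ⟨Bm_comm hij, fun x y h => Bm_apply_far i j h⟩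

lemma alpha_apply_flip (k i : Fin D) (x : Vx D) :
    alpha k x (flip i x) = if i = k then 1 else 0 := by
  rw [alpha_eq]
  refine if_congr ⟨fun h => flip_inj_idx h, fun h => by rw [h]⟩ rfl rfl

lemma alpha_apply_diag (k : Fin D) (x : Vx D) : alpha k x x = 0 := by
  rw [alpha_eq, if_neg fun h => flip_ne k x h.symm]

/-- the big family: identity, the `alpha`s, and the `Bm`s. -/
noncomputable def Fam (D : ℕ) : Unit ⊕ (Fin D ⊕ Pairs D) → Matrix (Vx D) (Vx D) ℝ :=
  Sum.elim (fun _ => 1) (Sum.elim (fun k => alpha k) (fun p => Bm p.1.1 p.1.2))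

lemma fam_indep : LinearIndependent ℝ (Fam D) := by
  rw [Fintype.linearIndependent_iff]
  intro g hg
  have entry : ∀ x y : Vx D,
      g (Sum.inl ()) * (1 : Matrix (Vx D) (Vx D) ℝ) x y +
        ((∑ k : Fin D, g (Sum.inr (Sum.inl k)) * alpha k x y) +
          ∑ p : Pairs D, g (Sum.inr (Sum.inr p)) * Bm p.1.1 p.1.2 x y) = 0 := by
    intro x y
    have h1 := congrFun (congrFun hg x) y
    rw [Matrix.sum_apply, Matrix.zero_apply] at h1
    rw [Fintype.sum_sum_type, Fintype.sum_sum_type] at h1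
    simp only [Matrix.smul_apply, smul_eq_mul, Fam, Sum.elim_inl, Sum.elim_inr,
      Finset.univ_unique, Finset.sum_singleton] at h1
    exact h1
  -- the constant coefficient vanishes
  have hc : g (Sum.inl ()) = 0 := by
    have h1 := entry (x0 D) (x0 D)
    rw [Matrix.one_apply_eq] at h1
    rw [Finset.sum_eq_zero (fun k _ => by rw [alpha_apply_diag]; ring),
      Finset.sum_eq_zero (fun p _ => by rw [Bm_apply_diag]; ring)] at h1
    linarith
  -- edge equations
  have edge : ∀ (i : Fin D) (x : Vx D),
      g (Sum.inr (Sum.inl i)) +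
        ∑ p : Pairs D, g (Sum.inr (Sum.inr p)) * Bm p.1.1 p.1.2 x (flip i x) = 0 := by
    intro i x
    have h1 := entry x (flip i x)
    rw [Matrix.one_apply_ne fun h => flip_ne i x h.symm, hc] at h1
    have h2 : ∑ k : Fin D, g (Sum.inr (Sum.inl k)) * alpha k x (flip i x)
        = g (Sum.inr (Sum.inl i)) := by
      rw [sum_single (f := fun k => g (Sum.inr (Sum.inl k)) * alpha k x (flip i x))
        (m := i) (fun k hk => by
          show g (Sum.inr (Sum.inl k)) * alpha k x (flip i x) = 0
          rw [alpha_apply_flip, if_neg fun h => hk h.symm]; ring)]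
      show g (Sum.inr (Sum.inl i)) * alpha i x (flip i x) = _
      rw [alpha_apply_flip, if_pos rfl, mul_one]
    rw [h2] at h1
    linarith
  -- pair coefficients vanish
  have ht : ∀ p : Pairs D, g (Sum.inr (Sum.inr p)) = 0 := by
    rintro ⟨⟨i, j⟩, hij⟩
    have e1 := edge i (x0 D)
    have e2 := edge i (flip j (x0 D))
    have e3 := core_sum (fun p => g (Sum.inr (Sum.inr p))) hij
    have e3' : (4 : ℝ) * g (Sum.inr (Sum.inr ⟨(i, j), hij⟩)) =
        (∑ p : Pairs D, g (Sum.inr (Sum.inr p)) * Bm p.1.1 p.1.2 (x0 D) (flip i (x0 D))) -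
        ∑ p : Pairs D, g (Sum.inr (Sum.inr p)) *
          Bm p.1.1 p.1.2 (flip j (x0 D)) (flip i (flip j (x0 D))) := by
      calc (4 : ℝ) * g (Sum.inr (Sum.inr ⟨(i, j), hij⟩))
          = ∑ p : Pairs D, g (Sum.inr (Sum.inr p)) *
              (Bm p.1.1 p.1.2 (x0 D) (flip i (x0 D)) -
                Bm p.1.1 p.1.2 (flip j (x0 D)) (flip i (flip j (x0 D)))) := e3.symm
        _ = ∑ p : Pairs D,
              (g (Sum.inr (Sum.inr p)) * Bm p.1.1 p.1.2 (x0 D) (flip i (x0 D)) -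
                g (Sum.inr (Sum.inr p)) *
                  Bm p.1.1 p.1.2 (flip j (x0 D)) (flip i (flip j (x0 D)))) :=
            Finset.sum_congr rfl fun p _ => by ring
        _ = _ := Finset.sum_sub_distrib _ _
    linarith
  -- alpha coefficients vanish
  have ha : ∀ i : Fin D, g (Sum.inr (Sum.inl i)) = 0 := by
    intro i
    have e1 := edge i (x0 D)
    rw [Finset.sum_eq_zero (fun p _ => by rw [ht p]; ring)] at e1
    linarith
  rintro (⟨⟩ | (k | p))
  · exact hc
  · exact ha k
  · exact ht p

def pairsEquiv : Pairs D ≃ (Σ j : Fin D, Fin j.1) where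
  toFun p := ⟨p.1.2, ⟨p.1.1.1, p.2⟩⟩
  invFun q := ⟨(⟨q.2.1, lt_trans q.2.2 q.1.2⟩, q.1), q.2.2⟩
  left_inv p := rfl
  right_inv q := rfl

lemma card_pairs : Fintype.card (Pairs D) = D.choose 2 := by
  rw [Fintype.card_congr pairsEquiv, Fintype.card_sigma]
  simp only [Fintype.card_fin]
  have h1 : ∑ j : Fin D, (j : ℕ) = ∑ i ∈ Finset.range D, i := by
    exact Fin.sum_univ_eq_sum_range (fun i => i) D
  have h2 := Finset.sum_range_id_mul_two D
  rw [h1, Nat.choose_two_right]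
  omega

/-- the evaluation map recording the determining data of an A-like matrix. -/
noncomputable def Phi (D : ℕ) :
    Matrix (Vx D) (Vx D) ℝ →ₗ[ℝ] ℝ × (Fin D → ℝ) × (Pairs D → ℝ) where
  toFun B := (B (x0 D) (x0 D), fun k => B (x0 D) (flip k (x0 D)),
    fun p => B (x0 D) (flip p.1.1 (x0 D)) -
      B (flip p.1.2 (x0 D)) (flip p.1.1 (flip p.1.2 (x0 D))))
  map_add' a b := by
    refine Prod.ext rfl (Prod.ext rfl (funext fun p => ?_))
    show (a + b) (x0 D) (flip p.1.1 (x0 D)) -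
        (a + b) (flip p.1.2 (x0 D)) (flip p.1.1 (flip p.1.2 (x0 D))) = _
    rw [Matrix.add_apply, Matrix.add_apply]
    show _ = (a (x0 D) (flip p.1.1 (x0 D)) -
        a (flip p.1.2 (x0 D)) (flip p.1.1 (flip p.1.2 (x0 D)))) +
      (b (x0 D) (flip p.1.1 (x0 D)) -
        b (flip p.1.2 (x0 D)) (flip p.1.1 (flip p.1.2 (x0 D))))
    ring
  map_smul' c a := by
    refine Prod.ext rfl (Prod.ext rfl (funext fun p => ?_))
    show (c • a) (x0 D) (flip p.1.1 (x0 D)) -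
        (c • a) (flip p.1.2 (x0 D)) (flip p.1.1 (flip p.1.2 (x0 D))) = _
    rw [Matrix.smul_apply, Matrix.smul_apply]
    show _ = c * (a (x0 D) (flip p.1.1 (x0 D)) -
        a (flip p.1.2 (x0 D)) (flip p.1.1 (flip p.1.2 (x0 D))))
    simp only [smul_eq_mul]
    ring

lemma phi_inj_on_Alike (B : Matrix (Vx D) (Vx D) ℝ) (hB : B ∈ AlikeSub D)
    (h : Phi D B = 0) : B = 0 := by
  obtain ⟨hc, hs⟩ := hB
  have h1 : B (x0 D) (x0 D) = 0 := congrArg Prod.fst h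
  have h2 : ∀ k : Fin D, B (x0 D) (flip k (x0 D)) = 0 :=
    fun k => congrFun (congrArg (fun u => u.2.1) h) k
  have h3 : ∀ p : Pairs D, B (x0 D) (flip p.1.1 (x0 D)) -
      B (flip p.1.2 (x0 D)) (flip p.1.1 (flip p.1.2 (x0 D))) = 0 :=
    fun p => congrFun (congrArg (fun u => u.2.2) h) p
  refine eq_zero_of_Alike hs hc h1 h2 fun k l hkl => ?_
  have := h3 ⟨(k, l), hkl⟩
  linarith

lemma finrank_Alike : Module.finrank ℝ (AlikeSub D) = 1 + D + D.choose 2 := by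
  refine le_antisymm ?_ ?_
  · -- upper bound via the injective map Phi
    have hker : ∀ a : AlikeSub D, ((Phi D).comp (AlikeSub D).subtype) a = 0 → a = 0 :=
      fun a ha => Subtype.ext (phi_inj_on_Alike a.1 a.2 ha)
    have hinj : Function.Injective ((Phi D).comp (AlikeSub D).subtype) :=
      LinearMap.ker_eq_bot.mp (LinearMap.ker_eq_bot'.mpr hker)
    have hle := LinearMap.finrank_le_finrank_of_injective hinj
    have hcodomain : Module.finrank ℝ (ℝ × (Fin D → ℝ) × (Pairs D → ℝ)) =
        1 + D + D.choose 2 := by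
      rw [Module.finrank_prod, Module.finrank_prod, Module.finrank_self,
        Module.finrank_pi, Module.finrank_pi, Fintype.card_fin, card_pairs]
      ring
    rw [hcodomain] at hle
    exact hle
  · -- lower bound via the independent family
    have hr : Set.range (Fam D) ⊆ (AlikeSub D : Set (Matrix (Vx D) (Vx D) ℝ)) := by
      rintro M ⟨i, rfl⟩
      rcases i with ⟨⟩ | (k | p)
      · exact one_mem_AlikeSub
      · exact alpha_mem_AlikeSub k
      · exact Bm_mem_AlikeSub (ne_of_lt p.2)
    have hle : Submodule.span ℝ (Set.range (Fam D)) ≤ AlikeSub D :=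
      Submodule.span_le.mpr hr
    have hcard : Module.finrank ℝ (Submodule.span ℝ (Set.range (Fam D))) =
        1 + D + D.choose 2 := by
      rw [finrank_span_eq_card fam_indep]
      rw [Fintype.card_sum, Fintype.card_sum, Fintype.card_unit, Fintype.card_fin, card_pairs]
      ring
    rw [← hcard]
    exact Submodule.finrank_mono hle

lemma span_Bm_eq : Submodule.span ℝ
    (Set.range (fun p : Pairs D => Bm p.1.1 p.1.2)) = AntiSub D := by
  refine le_antisymm (Submodule.span_le.mpr ?_) ?_
  · rintro M ⟨p, rfl⟩
    exact Bm_mem_AntiSub (ne_of_lt p.2)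
  · intro B hB
    set t : Pairs D → ℝ := fun p => (B (x0 D) (flip p.1.1 (x0 D)) -
      B (flip p.1.2 (x0 D)) (flip p.1.1 (flip p.1.2 (x0 D)))) / 4 with hton
    set C : Matrix (Vx D) (Vx D) ℝ := ∑ p : Pairs D, t p • Bm p.1.1 p.1.2 with hCdef
    have hCmem : C ∈ AntiSub D :=
      Submodule.sum_mem _ fun p _ =>
        Submodule.smul_mem _ _ (Bm_mem_AntiSub (ne_of_lt p.2))
    have hBC : B - C ∈ AntiSub D := Submodule.sub_mem _ hB hCmem
    have hCval : ∀ x y : Vx D, C x y = ∑ p : Pairs D, t p * Bm p.1.1 p.1.2 x y := by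
      intro x y
      rw [hCdef, Matrix.sum_apply]
      exact Finset.sum_congr rfl fun p _ => rfl
    have hzero : B - C = 0 := by
      refine eq_zero_of_antisym hBC.1.2 hBC.1.1 hBC.2 fun k l hkl => ?_
      have hcore := core_sum t hkl
      have hsum : C (x0 D) (flip k (x0 D)) - C (flip l (x0 D)) (flip k (flip l (x0 D))) =
          ∑ p : Pairs D, t p *
            (Bm p.1.1 p.1.2 (x0 D) (flip k (x0 D)) -
              Bm p.1.1 p.1.2 (flip l (x0 D)) (flip k (flip l (x0 D)))) := by
        rw [hCval, hCval, ← Finset.sum_sub_distrib]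
        exact Finset.sum_congr rfl fun p _ => (mul_sub _ _ _).symm
      have ht' : t ⟨(k, l), hkl⟩ = (B (x0 D) (flip k (x0 D)) -
          B (flip l (x0 D)) (flip k (flip l (x0 D)))) / 4 := rfl
      rw [Matrix.sub_apply, Matrix.sub_apply]
      rw [ht'] at hcore
      linarith
    have hBeq : B = C := by
      have := sub_eq_zero.mp hzero
      exact this
    rw [hBeq, hCdef]
    refine Submodule.sum_mem _ fun p _ => Submodule.smul_mem _ _ ?_
    exact Submodule.subset_span ⟨p, rfl⟩

end HC

theorem antisym_Alike_basis (D : ℕ) (hD : 0 < D) :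
    LinearIndependent ℝ
      (fun p : {p : Fin D × Fin D // p.1 < p.2} =>
        alphaStar p.1.1 * adjA D * alphaStar p.1.2 - alphaStar p.1.2 * adjA D * alphaStar p.1.1) ∧
    (Submodule.span ℝ
        (Set.range (fun p : {p : Fin D × Fin D // p.1 < p.2} =>
          alphaStar p.1.1 * adjA D * alphaStar p.1.2 -
            alphaStar p.1.2 * adjA D * alphaStar p.1.1)) : Set (Matrix (Vx D) (Vx D) ℝ)) =
      {B | (B * adjA D = adjA D * B ∧ ∀ x y : Vx D, 2 ≤ hamming x y → B x y = 0) ∧ Bᵀ = -B} ∧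
    Module.finrank ℝ
      (Submodule.span ℝ
        (Set.range (fun p : {p : Fin D × Fin D // p.1 < p.2} =>
          alphaStar p.1.1 * adjA D * alphaStar p.1.2 -
            alphaStar p.1.2 * adjA D * alphaStar p.1.1))) = D.choose 2 ∧
    Module.finrank ℝ
      (Submodule.span ℝ
        {B : Matrix (Vx D) (Vx D) ℝ |
          B * adjA D = adjA D * B ∧ ∀ x y : Vx D, 2 ≤ hamming x y → B x y = 0}) =
      1 + D + D.choose 2 := by
  have small : LinearIndependent ℝ
      (fun p : {p : Fin D × Fin D // p.1 < p.2} =>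
        alphaStar p.1.1 * adjA D * alphaStar p.1.2 -
          alphaStar p.1.2 * adjA D * alphaStar p.1.1) :=
    HC.fam_indep.comp (Sum.inr ∘ Sum.inr) (Sum.inr_injective.comp Sum.inr_injective)
  have hspan : Submodule.span ℝ
      (Set.range (fun p : {p : Fin D × Fin D // p.1 < p.2} =>
        alphaStar p.1.1 * adjA D * alphaStar p.1.2 -
          alphaStar p.1.2 * adjA D * alphaStar p.1.1)) = HC.AntiSub D := HC.span_Bm_eq
  refine ⟨small, ?_, ?_, ?_⟩
  · rw [hspan]
    rfl
  · exact (finrank_span_eq_card small).trans HC.card_pairs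
  · have hset : {B : Matrix (Vx D) (Vx D) ℝ |
        B * adjA D = adjA D * B ∧ ∀ x y : Vx D, 2 ≤ hamming x y → B x y = 0} =
        ↑(HC.AlikeSub D) := rfl
    rw [hset, Submodule.span_eq]
    exact HC.finrank_Alike
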